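/- For every integer n ≥ 0, the Hankel determinant D_n = det((s_{i+j})_{0 ≤ i,j ≤ n}) equals (∏_{j=1}^n (p;q)_j·(q;q)_j) · q^{−(n+1)(2n+1)(2n+3)/6}. Consequently D_n/D_{n−1} = (p;q)_n·(q;q)_n·q^{−(2n+1)²/2} for n ≥ 1. -/

import Mathlib

/-- Finite q-shifted factorial `(z;q)_n`. -/
noncomputable def qp (z q : ℝ) (n : ℕ) : ℝ := ∏ k ∈ Finset.range n, (1 - z * q ^ k)

/-- Generalized Stieltjes–Wigert moments `s_n = (p;q)_n q^{-(n+1)²/2}`. -/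
noncomputable def sw (p q : ℝ) (n : ℕ) : ℝ := qp p q n * q ^ (-(((n : ℝ) + 1) ^ 2) / 2)

/-- Hankel determinant `D_n = det (s_{i+j})_{0 ≤ i,j ≤ n}`. -/
noncomputable def hD (p q : ℝ) (n : ℕ) : ℝ :=
  (Matrix.of fun i j : Fin (n + 1) => sw p q ((i : ℕ) + (j : ℕ))).det


lemma qp_zero (z q : ℝ) : qp z q 0 = 1 := Finset.prod_range_zero _

lemma qp_succ (z q : ℝ) (n : ℕ) : qp z q (n+1) = qp z q n * (1 - z * q ^ n) :=
  Finset.prod_range_succ _ _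

lemma qp_succ' (z q : ℝ) (n : ℕ) : qp z q (n+1) = (1 - z) * qp (z*q) q n := by
  unfold qp
  rw [Finset.prod_range_succ']
  simp only [pow_zero, mul_one]
  rw [mul_comm]
  congr 1
  apply Finset.prod_congr rfl
  intro k _
  ring

lemma qp_pos {z q : ℝ} (hz0 : 0 ≤ z) (hz1 : z < 1) (hq0 : 0 < q) (hq1 : q < 1) (n : ℕ) :
    0 < qp z q n := by
  apply Finset.prod_pos
  intro k _
  have h1 : z * q ^ k ≤ z * 1 := by
    apply mul_le_mul_of_nonneg_left _ hz0
    exact pow_le_one₀ hq0.le hq1.le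
  linarith

/-- Reduced Hankel-type matrix `H i j = (p;q)_{i+j} q^{-ij}`. -/
noncomputable def HM (p q : ℝ) (n : ℕ) : Matrix (Fin (n+1)) (Fin (n+1)) ℝ :=
  Matrix.of fun i j => qp p q ((i:ℕ) + (j:ℕ)) * ((q ^ ((i:ℕ) * (j:ℕ)))⁻¹)

section Rec
variable {p q : ℝ} (hq : q ≠ 0)

/-- Matrix after column operations. -/
noncomputable def AM (p q : ℝ) (n : ℕ) : Matrix (Fin (n+2)) (Fin (n+2)) ℝ :=
  Matrix.of fun i j => Fin.cases (qp p q (i:ℕ))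
    (fun j' : Fin (n+1) => (1 - q ^ (i:ℕ)) * qp p q ((i:ℕ) + (j':ℕ)) *
      ((q ^ ((i:ℕ) * ((j':ℕ)+1)))⁻¹)) j

/-- Unit upper-triangular column-operation matrix. -/
noncomputable def UM (p q : ℝ) (n : ℕ) : Matrix (Fin (n+2)) (Fin (n+2)) ℝ :=
  Matrix.of fun k j => if k = j then 1 else if (k:ℕ) + 1 = (j:ℕ) then -(1 - p * q ^ (k:ℕ)) else 0

lemma UM_det (p q : ℝ) (n : ℕ) : (UM p q n).det = 1 := by
  have h : (UM p q n).BlockTriangular id := by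
    intro i j hij
    simp only [UM, Matrix.of_apply]
    have hv : (j:ℕ) < (i:ℕ) := hij
    rw [if_neg (by exact fun h => by subst h; exact lt_irrefl _ hv),
        if_neg (by omega)]
  rw [Matrix.det_of_upperTriangular h]
  apply Finset.prod_eq_one
  intro i _
  simp [UM]

lemma HM_mul_UM (hq : q ≠ 0) (n : ℕ) : HM p q (n+1) * UM p q n = AM p q n := by
  ext i j
  rw [Matrix.mul_apply]
  induction j using Fin.cases with
  | zero =>
      rw [Finset.sum_eq_single 0]
      · simp [HM, UM, AM]
      · intro k _ hk
        have : ¬ ((k:ℕ) + 1 = ((0 : Fin (n+2)):ℕ)) := by simp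
        simp [UM, hk, this]
      · simp
  | succ j' =>
      rw [Finset.sum_eq_add_of_mem (j'.castSucc) (j'.succ) ?_ ?_ ?_ ?_]
      · have hne : j'.castSucc ≠ j'.succ := (Fin.castSucc_lt_succ : j'.castSucc < j'.succ).ne
        simp only [HM, UM, AM, Matrix.of_apply, Fin.cases_succ, Fin.val_succ,
          Fin.coe_castSucc, if_neg hne, if_pos rfl, if_true, mul_one]
        have e1 : (i:ℕ) + ((j':ℕ)+1) = ((i:ℕ)+(j':ℕ)) + 1 := by ring
        rw [e1, qp_succ, pow_add q (i:ℕ) (j':ℕ)]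
        have e2 : (i:ℕ) * ((j':ℕ)+1) = (i:ℕ)*(j':ℕ) + (i:ℕ) := by ring
        rw [e2, pow_add]
        field_simp
        ring
      · exact Finset.mem_univ _
      · exact Finset.mem_univ _
      · exact fun h => absurd (congrArg Fin.val h) (by simp)
      · intro k _ hk
        have h1 : k ≠ j'.succ := hk.2
        have h2 : (k:ℕ) ≠ (j':ℕ) := fun h => hk.1 (Fin.ext (by simpa [Fin.coe_castSucc] using h))
        simp [UM, h1, h2]

end Rec

lemma sum_aux (n : ℕ) : (∑ i ∈ Finset.range (n+1), (i+1)) + (∑ j ∈ Finset.range (n+1), j)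
    = (n+1)^2 := by
  have h1 : (∑ i ∈ Finset.range (n+1), (i+1)) = (∑ i ∈ Finset.range (n+1), i) + (n+1) := by
    rw [Finset.sum_add_distrib]
    simp
  have h2 := Finset.sum_range_id_mul_two (n+1)
  have h3 : (∑ i ∈ Finset.range (n+1), i) + (n+1) + (∑ j ∈ Finset.range (n+1), j)
      = (∑ i ∈ Finset.range (n+1), i) * 2 + (n+1) := by ring
  rw [h1, h3, h2]
  have h4 : n + 1 - 1 = n := by omega
  rw [h4]
  ring

lemma AM_det (p q : ℝ) (n : ℕ) :
    (AM p q n).det = ((AM p q n).submatrix Fin.succ Fin.succ).det := by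
  rw [Matrix.det_succ_row_zero, Fin.sum_univ_succ]
  have h0 : AM p q n 0 0 = 1 := by simp [AM, qp_zero]
  have hz : ∀ j : Fin (n+1), AM p q n 0 j.succ = 0 := by
    intro j; simp [AM]
  simp [h0, hz, Fin.succAbove_zero]

lemma detHM_succ {p q : ℝ} (hq : q ≠ 0) (n : ℕ) :
    (HM p q (n+1)).det
      = (1-p)^(n+1) * qp q q (n+1) * (q ^ ((n+1)^2))⁻¹ * (HM (p*q) q n).det := by
  have h1 : (HM p q (n+1)).det = (AM p q n).det := by
    rw [← HM_mul_UM hq n, Matrix.det_mul, UM_det, mul_one]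
  rw [h1, AM_det]
  have h2 : (AM p q n).submatrix Fin.succ Fin.succ
      = Matrix.of fun i j : Fin (n+1) => ((q ^ (j:ℕ))⁻¹) *
          (Matrix.of fun i j : Fin (n+1) =>
            ((1-p) * (1 - q ^ ((i:ℕ)+1)) * (q ^ ((i:ℕ)+1))⁻¹) * HM (p*q) q n i j) i j := by
    ext i j
    simp only [Matrix.submatrix_apply, AM, HM, Matrix.of_apply, Fin.cases_succ, Fin.val_succ]
    have e1 : (i:ℕ) + 1 + (j:ℕ) = ((i:ℕ) + (j:ℕ)) + 1 := by ring
    rw [e1, qp_succ']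
    have e2 : ((i:ℕ)+1) * ((j:ℕ)+1) = (i:ℕ)*(j:ℕ) + ((i:ℕ)+1) + (j:ℕ) := by ring
    rw [e2, pow_add, pow_add, mul_inv, mul_inv]
    ring
  rw [h2, Matrix.det_mul_row, Matrix.det_mul_column]
  have hr : (∏ i : Fin (n+1), ((1-p) * (1 - q ^ ((i:ℕ)+1)) * (q ^ ((i:ℕ)+1))⁻¹))
      = (1-p)^(n+1) * qp q q (n+1) * (∏ i : Fin (n+1), (q ^ ((i:ℕ)+1))⁻¹) := by
    rw [Finset.prod_mul_distrib, Finset.prod_mul_distrib, Finset.prod_const,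
      Finset.card_univ, Fintype.card_fin]
    congr 1
    congr 1
    rw [Fin.prod_univ_eq_prod_range (fun i => (1 - q ^ (i+1)))]
    unfold qp
    apply Finset.prod_congr rfl
    intro k _
    rw [pow_succ']
  rw [hr]
  have hpow : (∏ j : Fin (n+1), (q ^ (j:ℕ))⁻¹) * (∏ i : Fin (n+1), (q ^ ((i:ℕ)+1))⁻¹)
      = (q ^ ((n+1)^2))⁻¹ := by
    rw [Fin.prod_univ_eq_prod_range (fun j => (q ^ j)⁻¹) (n+1),
      Fin.prod_univ_eq_prod_range (fun i => (q ^ (i+1))⁻¹) (n+1),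
      Finset.prod_inv_distrib, Finset.prod_inv_distrib, ← mul_inv,
      Finset.prod_pow_eq_pow_sum, Finset.prod_pow_eq_pow_sum, ← pow_add]
    rw [add_comm]
    rw [sum_aux n]
  rw [← hpow]
  ring

lemma prod_qp_shift (p q : ℝ) (n : ℕ) :
    (∏ j ∈ Finset.range (n+1), qp p q (j+1))
      = (1-p)^(n+1) * ∏ j ∈ Finset.range n, qp (p*q) q (j+1) := by
  have h1 : (∏ j ∈ Finset.range (n+1), qp p q (j+1))
      = ∏ j ∈ Finset.range (n+1), ((1-p) * qp (p*q) q j) :=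
    Finset.prod_congr rfl (fun j _ => qp_succ' p q j)
  rw [h1, Finset.prod_mul_distrib, Finset.prod_const, Finset.card_range]
  congr 1
  rw [Finset.prod_range_succ' (fun j => qp (p*q) q j) n, qp_zero, mul_one]

lemma detHM {q : ℝ} (hq : q ≠ 0) :
    ∀ (n : ℕ) (p : ℝ), (HM p q n).det
      = (∏ j ∈ Finset.range n, qp p q (j+1) * qp q q (j+1)) *
        (q ^ (∑ i ∈ Finset.range (n+1), i^2))⁻¹ := by
  intro n
  induction n with
  | zero =>
      intro p
      rw [show (HM p q 0).det = HM p q 0 0 0 from Matrix.det_fin_one _]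
      simp [HM, qp_zero]
  | succ m ih =>
      intro p
      rw [detHM_succ hq m, ih (p*q)]
      rw [Finset.prod_mul_distrib, Finset.prod_mul_distrib, prod_qp_shift,
        Finset.prod_range_succ (fun j => qp q q (j+1)) m]
      rw [Finset.sum_range_succ (fun i => i^2) (m+1), pow_add q, mul_inv]
      ring

lemma rpow_sum {q : ℝ} (hq : 0 < q) {ι : Type*} (s : Finset ι) (f : ι → ℝ) :
    q ^ (∑ i ∈ s, f i) = ∏ i ∈ s, q ^ f i := by
  classical
  induction s using Finset.induction with
  | empty => simp
  | insert a s h ih => rw [Finset.sum_insert h, Finset.prod_insert h, Real.rpow_add hq, ih]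

lemma rsum_sq (m : ℕ) :
    ∑ i ∈ Finset.range m, ((i:ℝ))^2 = ((m:ℝ)-1)*(m:ℝ)*(2*(m:ℝ)-1)/6 := by
  induction m with
  | zero => simp
  | succ k ih => rw [Finset.sum_range_succ, ih]; push_cast; ring

lemma rsum_S1 (m : ℕ) :
    ∑ i ∈ Finset.range m, (-(((i:ℝ)+1)^2)/2) = -((m:ℝ)*((m:ℝ)+1)*(2*(m:ℝ)+1))/12 := by
  induction m with
  | zero => simp
  | succ k ih => rw [Finset.sum_range_succ, ih]; push_cast; ring

lemma rsum_S2 (m : ℕ) :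
    ∑ i ∈ Finset.range m, (-(((i:ℝ)^2 + 2*(i:ℝ)))/2)
      = -(((m:ℝ)-1)*(m:ℝ)*(2*(m:ℝ)-1) + 6*(m:ℝ)*((m:ℝ)-1))/12 := by
  induction m with
  | zero => simp
  | succ k ih => rw [Finset.sum_range_succ, ih]; push_cast; ring

lemma hD_eq {p q : ℝ} (hq0 : 0 < q) (n : ℕ) :
    hD p q n = (∏ i : Fin (n+1), q ^ (-((((i:ℕ):ℝ))+1)^2/2)) *
      ((∏ j : Fin (n+1), q ^ (-((((j:ℕ):ℝ))^2 + 2*(((j:ℕ):ℝ)))/2)) * (HM p q n).det) := by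
  have hent : (Matrix.of fun i j : Fin (n + 1) => sw p q ((i : ℕ) + (j : ℕ)))
      = Matrix.of fun i j : Fin (n+1) => (q ^ (-((((i:ℕ):ℝ))+1)^2/2)) *
          (Matrix.of (fun i j : Fin (n+1) =>
            (q ^ (-((((j:ℕ):ℝ))^2 + 2*(((j:ℕ):ℝ)))/2)) * HM p q n i j) i j) := by
    ext i j
    simp only [Matrix.of_apply, HM]
    unfold sw
    have hinv : ((q ^ ((i:ℕ) * (j:ℕ)))⁻¹ : ℝ) = q ^ (-(((i:ℕ)*(j:ℕ) : ℕ) : ℝ)) := by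
      rw [Real.rpow_neg hq0.le, Real.rpow_natCast]
    rw [hinv]
    have key : q ^ (-((((i:ℕ)+(j:ℕ) : ℕ):ℝ) + 1) ^ 2 / 2)
        = q ^ (-((((i:ℕ):ℝ))+1)^2/2) *
          (q ^ (-((((j:ℕ):ℝ))^2 + 2*(((j:ℕ):ℝ)))/2) * q ^ (-(((i:ℕ)*(j:ℕ) : ℕ) : ℝ))) := by
      rw [← Real.rpow_add hq0, ← Real.rpow_add hq0]
      congr 1
      push_cast
      ring
    rw [key]
    ring
  unfold hD
  rw [hent, Matrix.det_mul_column, Matrix.det_mul_row]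

lemma hD_closed {p q : ℝ} (hq0 : 0 < q) (n : ℕ) :
    hD p q n = (∏ j ∈ Finset.range n, qp p q (j + 1) * qp q q (j + 1)) *
          q ^ (-(((n : ℝ) + 1) * (2 * (n : ℝ) + 1) * (2 * (n : ℝ) + 3)) / 6) := by
  have hq : q ≠ 0 := ne_of_gt hq0
  rw [hD_eq hq0 n, detHM hq n p]
  rw [Fin.prod_univ_eq_prod_range (fun i => q ^ (-(((i:ℕ):ℝ)+1)^2/2)) (n+1),
    Fin.prod_univ_eq_prod_range (fun j => q ^ (-((((j:ℕ):ℝ))^2 + 2*(((j:ℕ):ℝ)))/2)) (n+1),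
    ← rpow_sum hq0, ← rpow_sum hq0]
  have hN : ((q ^ (∑ i ∈ Finset.range (n+1), i^2))⁻¹ : ℝ)
      = q ^ (-((∑ i ∈ Finset.range (n+1), i^2 : ℕ) : ℝ)) := by
    rw [Real.rpow_neg hq0.le, Real.rpow_natCast]
  rw [hN]
  rw [show ∀ a b P c : ℝ, a * (b * (P * c)) = P * (a * (b * c)) from fun a b P c => by ring]
  congr 1
  rw [← Real.rpow_add hq0, ← Real.rpow_add hq0]
  congr 1
  rw [rsum_S1 (n+1), rsum_S2 (n+1)]
  have : ((∑ i ∈ Finset.range (n+1), i^2 : ℕ) : ℝ) = ∑ i ∈ Finset.range (n+1), ((i:ℝ))^2 := by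
    push_cast; ring
  rw [this, rsum_sq (n+1)]
  push_cast
  ring

theorem stmt_4 (p q : ℝ) (hp0 : 0 ≤ p) (hp1 : p < 1) (hq0 : 0 < q) (hq1 : q < 1) :
    (∀ n : ℕ, hD p q n
        = (∏ j ∈ Finset.range n, qp p q (j + 1) * qp q q (j + 1)) *
          q ^ (-(((n : ℝ) + 1) * (2 * (n : ℝ) + 1) * (2 * (n : ℝ) + 3)) / 6)) ∧
    (∀ n : ℕ, 1 ≤ n → hD p q n / hD p q (n - 1)
        = qp p q n * qp q q n * q ^ (-((2 * (n : ℝ) + 1) ^ 2) / 2)) := by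
  constructor
  · exact fun n => hD_closed hq0 n
  · intro n hn
    obtain ⟨m, rfl⟩ : ∃ m, n = m + 1 := ⟨n - 1, (Nat.succ_pred_eq_of_pos hn).symm⟩
    rw [show m + 1 - 1 = m by omega]
    rw [hD_closed hq0 (m+1), hD_closed hq0 m, Finset.prod_range_succ]
    have hPm : 0 < ∏ j ∈ Finset.range m, qp p q (j + 1) * qp q q (j + 1) :=
      Finset.prod_pos fun j _ => mul_pos (qp_pos hp0 hp1 hq0 hq1 _)
        (qp_pos hq0.le hq1 hq0 hq1 _)
    have hrp : (0:ℝ) < q ^ (-(((m : ℝ) + 1) * (2 * (m : ℝ) + 1) * (2 * (m : ℝ) + 3)) / 6) :=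
      Real.rpow_pos_of_pos hq0 _
    rw [div_eq_iff (ne_of_gt (mul_pos hPm hrp))]
    have hsplit : q ^ (-(((m:ℝ) + 1 + 1) * (2 * ((m:ℝ)+1) + 1) * (2 * ((m:ℝ)+1) + 3)) / 6)
        = q ^ (-((2 * (((m:ℕ)+1 : ℕ):ℝ) + 1) ^ 2) / 2) *
          q ^ (-(((m : ℝ) + 1) * (2 * (m : ℝ) + 1) * (2 * (m : ℝ) + 3)) / 6) := by
      rw [← Real.rpow_add hq0]
      congr 1
      push_cast
      ring
    push_cast
    rw [hsplit]
    push_cast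
    ring
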